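/- The 2×2 symmetric matrix Γ with entries Γ₁₁ = −4β_m(x_b + ε)/(x_a + x_b + ε)^3, Γ₂₂ = −4β_m(x_a + ε)/(x_a + x_b + ε)^3, and Γ₁₂ = Γ₂₁ = −2β_m ε/(x_a + x_b + ε)^3 is negative definite for all x_a, x_b ≥ 0, whenever β_m > 0 and ε > 0. -/

import Mathlib

theorem stmt_1 (βm ε xa xb : ℝ) (hβm : 0 < βm) (hε : 0 < ε)
    (hxa : 0 ≤ xa) (hxb : 0 ≤ xb) :
    (-(!![-4 * βm * (xb + ε) / (xa + xb + ε) ^ 3,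
          -2 * βm * ε / (xa + xb + ε) ^ 3;
          -2 * βm * ε / (xa + xb + ε) ^ 3,
          -4 * βm * (xa + ε) / (xa + xb + ε) ^ 3] : Matrix (Fin 2) (Fin 2) ℝ)).PosDef := by
  have hs : 0 < xa + xb + ε := by linarith
  have hs3 : 0 < (xa + xb + ε) ^ 3 := by positivity
  refine Matrix.PosDef.of_dotProduct_mulVec_pos ?_ ?_
  · ext i j
    fin_cases i <;> fin_cases j <;>
      simp [Matrix.conjTranspose, Matrix.vecHead, Matrix.vecTail]
  · intro x hx
    have h0 : x 0 ≠ 0 ∨ x 1 ≠ 0 := by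
      by_contra h
      push_neg at h
      apply hx
      ext i
      fin_cases i <;> simp [h.1, h.2]
    simp only [Matrix.neg_mulVec, dotProduct_neg, star_trivial,
      Matrix.mulVec, dotProduct, Fin.sum_univ_two,
      Matrix.cons_val', Matrix.cons_val_zero, Matrix.cons_val_one,
      Matrix.head_cons, Matrix.empty_val', Matrix.cons_val_fin_one,
      Matrix.head_fin_const]
    set a := x 0
    set b := x 1
    have key : 0 < 4 * βm * (xb + ε) * a ^ 2 + 4 * βm * ε * a * b
        + 4 * βm * (xa + ε) * b ^ 2 := by
      have hab : 0 < a ^ 2 + b ^ 2 := by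
        rcases h0 with h | h <;> positivity
      nlinarith [mul_nonneg (mul_nonneg hβm.le hε.le) (sq_nonneg (a + b)),
        mul_nonneg (mul_nonneg hβm.le hxb) (sq_nonneg a),
        mul_nonneg (mul_nonneg hβm.le hxa) (sq_nonneg b),
        mul_pos hβm (mul_pos hε hab)]
    have hpos : 0 < (4 * βm * (xb + ε) * a ^ 2 + 4 * βm * ε * a * b
        + 4 * βm * (xa + ε) * b ^ 2) / (xa + xb + ε) ^ 3 := div_pos key hs3
    convert hpos using 1
    · rfl
    simp only [Matrix.neg_apply, Matrix.of_apply, Matrix.cons_val', Matrix.cons_val_zero,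
      Matrix.cons_val_one, Matrix.head_cons, Matrix.empty_val',
      Matrix.cons_val_fin_one, Matrix.head_fin_const]
    field_simp
    ring
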